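/- For every odd integer k ≥ 3, the cyclic propagator integral vanishes: I_k = ∫_{[0,1]^k} ∏_{i=0}^{k−1} (fract(t_{(i+1) mod k} − t_i) − 1/2) dt₁ ⋯ dt_k = 0. (This is the vanishing of odd wheel Feynman diagram weights in the one-loop computation of the algebraic index.) -/

import Mathlib

open MeasureTheory Real

noncomputable section

/-- The cyclic propagator integral
`I_k = ∫_{[0,1]^k} ∏_{i=0}^{k−1} (fract(t_{(i+1) mod k} − t_i) − 1/2) dt₁ ⋯ dt_k`,
where the propagator is `P(x) = fract(x) − 1/2` and the indices are taken cyclically. -/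
def cyclicPropagatorIntegral (k : ℕ) : ℝ :=
  ∫ t in Set.univ.pi (fun _ : Fin k => Set.Icc (0:ℝ) 1),
    ∏ i : Fin k,
      (Int.fract (t ⟨((i : ℕ) + 1) % k, Nat.mod_lt _ (by have := i.isLt; omega)⟩ - t i)
        - 1/2)

/-- `ζ(k) = ∑_{n=1}^{∞} n^{−k}` as a real number. -/
def zetaSum (k : ℕ) : ℝ := ∑' n : ℕ, 1 / ((n : ℝ) + 1)^k

-- null set lemma: for i ≠ j, a.e. t, t j - t i is not an integer
lemma ae_diff_not_int {k : ℕ} (i j : Fin k) (hij : i ≠ j) :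
    ∀ᵐ t : Fin k → ℝ, ∀ n : ℤ, t j - t i ≠ (n : ℝ) := by
  rw [MeasureTheory.ae_all_iff]
  intro n
  rw [ae_iff]
  have : {t : Fin k → ℝ | ¬ t j - t i ≠ (n : ℝ)} = {t : Fin k → ℝ | t j = t i + n} := by
    ext t; simp [sub_eq_iff_eq_add]; constructor <;> (intro h; linarith)
  rw [this]
  classical
  set p : Fin k → Prop := fun l => l ≠ j with hp
  have hpi : p i := hij
  have hpj : ¬ p j := by simp [hp]
  set e := MeasurableEquiv.piEquivPiSubtypeProd (fun _ : Fin k => ℝ) p with he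
  have hmp := MeasureTheory.volume_preserving_piEquivPiSubtypeProd (fun _ : Fin k => ℝ) p
  have hmeas : MeasurableSet {t : Fin k → ℝ | t j = t i + n} := by
    have : {t : Fin k → ℝ | t j = t i + n} = {t | t j - t i = (n:ℝ)} := by
      ext t; simp [sub_eq_iff_eq_add]; constructor <;> (intro h; linarith)
    rw [this]
    exact measurableSet_eq_fun ((measurable_pi_apply j).sub (measurable_pi_apply i))
      measurable_const
  have key : volume {t : Fin k → ℝ | t j = t i + n}
      = (volume : Measure (({l // p l} → ℝ) × ({l // ¬ p l} → ℝ)))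
        (e.symm ⁻¹' {t : Fin k → ℝ | t j = t i + n}) := by
    exact (hmp.symm e |>.measure_preimage hmeas.nullMeasurableSet).symm
  rw [key]
  have hset : e.symm ⁻¹' {t : Fin k → ℝ | t j = t i + n}
      = {q : ({l // p l} → ℝ) × ({l // ¬ p l} → ℝ) | q.2 ⟨j, hpj⟩ = q.1 ⟨i, hpi⟩ + n} := by
    ext ⟨a, b⟩
    simp only [Set.mem_preimage, Set.mem_setOf_eq]
    have h1 : e.symm (a, b) j = b ⟨j, hpj⟩ := by
      simp [he, MeasurableEquiv.piEquivPiSubtypeProd, Equiv.piEquivPiSubtypeProd, hpj]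
    have h2 : e.symm (a, b) i = a ⟨i, hpi⟩ := by
      simp [he, MeasurableEquiv.piEquivPiSubtypeProd, Equiv.piEquivPiSubtypeProd, hpi]
    rw [h1, h2]
  rw [hset]
  have hm2 : MeasurableSet {q : ({l // p l} → ℝ) × ({l // ¬ p l} → ℝ) |
      q.2 ⟨j, hpj⟩ = q.1 ⟨i, hpi⟩ + n} :=
    measurableSet_eq_fun (measurable_snd.eval) (measurable_fst.eval.add measurable_const)
  rw [show (volume : Measure (({l // p l} → ℝ) × ({l // ¬ p l} → ℝ)))
      = (volume : Measure ({l // p l} → ℝ)).prod (volume : Measure ({l // ¬ p l} → ℝ)) from rfl]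
  rw [Measure.prod_apply hm2]
  have : ∀ a : {l // p l} → ℝ,
      (volume : Measure ({l // ¬ p l} → ℝ))
        (Prod.mk a ⁻¹' {q : ({l // p l} → ℝ) × ({l // ¬ p l} → ℝ) |
          q.2 ⟨j, hpj⟩ = q.1 ⟨i, hpi⟩ + n}) = 0 := by
    intro a
    have : (Prod.mk a ⁻¹' {q : ({l // p l} → ℝ) × ({l // ¬ p l} → ℝ) |
        q.2 ⟨j, hpj⟩ = q.1 ⟨i, hpi⟩ + n})
        = {b : {l // ¬ p l} → ℝ | b ⟨j, hpj⟩ = a ⟨i, hpi⟩ + n} := rfl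
    rw [this]
    exact Measure.pi_hyperplane _ _ _
  simp only [this, lintegral_zero]


/-- For every odd integer `k ≥ 3`, the cyclic propagator integral
vanishes: this is the vanishing of the odd wheel Feynman diagram weights in the one-loop
computation of the algebraic index. -/
theorem cyclicPropagatorIntegral_odd (k : ℕ) (hk : 3 ≤ k) (hko : Odd k) :
    cyclicPropagatorIntegral k = 0 := by
  classical
  set σ : Fin k → Fin k :=
    fun i => ⟨((i : ℕ) + 1) % k, Nat.mod_lt _ (by have := i.isLt; omega)⟩ with hσdef
  set f : (Fin k → ℝ) → ℝ := fun t => ∏ i : Fin k, (Int.fract (t (σ i) - t i) - 1/2) with hf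
  set S : Set (Fin k → ℝ) := Set.univ.pi (fun _ => Set.Icc (0:ℝ) 1) with hSdef
  have hS : MeasurableSet S := MeasurableSet.univ_pi (fun _ => measurableSet_Icc)
  have hσ : ∀ i : Fin k, σ i ≠ i := by
    intro i h
    have hv : ((i : ℕ) + 1) % k = (i : ℕ) := congrArg Fin.val h
    have hi := i.isLt
    rcases Nat.lt_or_ge ((i : ℕ) + 1) k with h' | h'
    · rw [Nat.mod_eq_of_lt h'] at hv; omega
    · have he : (i : ℕ) + 1 = k := by omega
      rw [he, Nat.mod_self] at hv
      omega
  set T : (Fin k → ℝ) → (Fin k → ℝ) := fun t i => 1 - t i with hT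
  have hTmp : MeasurePreserving T volume volume :=
    volume_preserving_pi (fun _ : Fin k => Measure.measurePreserving_sub_left volume 1)
  have hemb : MeasurableEmbedding T :=
    (MeasurableEquiv.piCongrRight
      (fun _ : Fin k => MeasurableEquiv.subLeft (1:ℝ))).measurableEmbedding
  have hTS : ∀ t : Fin k → ℝ, t ∈ S → T t ∈ S := by
    intro t ht i _
    have h := ht i (Set.mem_univ i)
    simp only [Set.mem_Icc] at h ⊢
    constructor <;> simp [hT] <;> linarith [h.1, h.2]
  have hdef : cyclicPropagatorIntegral k = ∫ t in S, f t := rfl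
  have hI : cyclicPropagatorIntegral k = ∫ t, S.indicator f t := by
    rw [hdef, ← integral_indicator hS]
  have h1 : ∫ t, S.indicator f t = ∫ t, S.indicator f (T t) :=
    (hTmp.integral_comp hemb _).symm
  have hae : ∀ᵐ t : Fin k → ℝ, S.indicator f (T t) = - S.indicator f t := by
    have hall : ∀ᵐ t : Fin k → ℝ, ∀ i : Fin k, ∀ n : ℤ, t (σ i) - t i ≠ (n : ℝ) := by
      rw [ae_all_iff]
      exact fun i => ae_diff_not_int i (σ i) (hσ i).symm
    filter_upwards [hall] with t ht
    by_cases hts : t ∈ S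
    · have hTt : T t ∈ S := hTS t hts
      rw [Set.indicator_of_mem hTt, Set.indicator_of_mem hts]
      have hterm : ∀ i : Fin k,
          Int.fract (T t (σ i) - T t i) - 1/2 = -(Int.fract (t (σ i) - t i) - 1/2) := by
        intro i
        have hx : Int.fract (t (σ i) - t i) ≠ 0 := by
          intro h0
          exact ht i ⌊t (σ i) - t i⌋
            (by have := Int.floor_add_fract (t (σ i) - t i); linarith)
        have hdiff : T t (σ i) - T t i = -(t (σ i) - t i) := by
          show (1 - t (σ i)) - (1 - t i) = -(t (σ i) - t i); ring
        rw [hdiff, Int.fract_neg hx]; ring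
      have : f (T t) = ∏ i : Fin k, -(Int.fract (t (σ i) - t i) - 1/2) :=
        Finset.prod_congr rfl (fun i _ => hterm i)
      rw [this]
      have : ∏ i : Fin k, -(Int.fract (t (σ i) - t i) - 1/2)
          = (-1 : ℝ) ^ k * ∏ i : Fin k, (Int.fract (t (σ i) - t i) - 1/2) := by
        calc ∏ i : Fin k, -(Int.fract (t (σ i) - t i) - 1/2)
            = ∏ i : Fin k, ((-1 : ℝ) * (Int.fract (t (σ i) - t i) - 1/2)) := by
              simp only [neg_one_mul]
          _ = (∏ _i : Fin k, (-1 : ℝ)) * ∏ i : Fin k, (Int.fract (t (σ i) - t i) - 1/2) :=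
              Finset.prod_mul_distrib
          _ = (-1 : ℝ) ^ k * ∏ i : Fin k, (Int.fract (t (σ i) - t i) - 1/2) := by
              rw [Finset.prod_const, Finset.card_univ, Fintype.card_fin]
      rw [this, hko.neg_one_pow, hf]
      ring
    · have hTt : T t ∉ S := by
        intro h
        apply hts
        intro i _
        have hh := h i (Set.mem_univ i)
        simp only [Set.mem_Icc, hT] at hh ⊢
        constructor <;> linarith [hh.1, hh.2]
      rw [Set.indicator_of_notMem hTt, Set.indicator_of_notMem hts, neg_zero]
  have h2 : ∫ t, S.indicator f (T t) = ∫ t, - S.indicator f t := integral_congr_ae hae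
  have h3 : (∫ t, - S.indicator f t) = - ∫ t, S.indicator f t := integral_neg _
  have : cyclicPropagatorIntegral k = - cyclicPropagatorIntegral k := by
    conv_lhs => rw [hI, h1, h2, h3]
    rw [hI]
  linarith


end
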